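/- For integers 0 ≤ m ≤ n, the generalized q-binomial polynomial satisfies the expansion [m,z choose n]_q = q^{-n(n-m)} Σ_{k=0}^{n-m} (-1)^{n-m-k} q^{binom(n-m-k,2)} [n-m choose n-m-k]_q [m+k,z choose m+k]_q, where [m,z choose n]_q := (1/[n]_q!) Π_{k=m-n+1}^{m} ([k]_q + q^k z). -/

import Mathlib

open Finset Polynomial

noncomputable def q : RatFunc ℚ := RatFunc.X

/-- q-integer `[k]_q = (1-q^k)/(1-q)` for `k : ℤ`. -/
noncomputable def qint (k : ℤ) : RatFunc ℚ := (1 - q ^ k) / (1 - q)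

/-- q-factorial `[n]_q!`. -/
noncomputable def qfact (n : ℕ) : RatFunc ℚ := ∏ m ∈ Finset.range n, qint (m + 1)

/-- q-Pochhammer `(A;Q)_n`. -/
noncomputable def qPoch (Q A : RatFunc ℚ) (n : ℕ) : RatFunc ℚ :=
  ∏ j ∈ Finset.range n, (1 - A * Q ^ j)

/-- The generalized q-binomial polynomial `[m, z choose n]_q`. -/
noncomputable def qbinomPoly (m n : ℕ) : Polynomial (RatFunc ℚ) :=
  Polynomial.C (qfact n)⁻¹ *
    ∏ k ∈ Finset.Icc ((m : ℤ) - n + 1) (m : ℤ),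
      (Polynomial.C (qint k) + Polynomial.C (q ^ k) * Polynomial.X)

/-- Gaussian binomial coefficient `[M choose N]_q`. -/
noncomputable def qchoose (M N : ℕ) : RatFunc ℚ :=
  if N ≤ M then qfact M / (qfact N * qfact (M - N)) else 0


-- basic nonvanishing
lemma q_ne_zero : q ≠ 0 := RatFunc.X_ne_zero

lemma one_sub_q_pow_ne (n : ℕ) (hn : 1 ≤ n) : (1 : RatFunc ℚ) - q ^ n ≠ 0 := by
  intro h
  have h2 : ((1 : Polynomial ℚ) - Polynomial.X ^ n) = 0 := by
    apply IsFractionRing.injective (Polynomial ℚ) (RatFunc ℚ)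
    rw [map_sub, map_one, map_pow, RatFunc.algebraMap_X, map_zero]
    exact h
  rw [sub_eq_zero] at h2
  have := congrArg Polynomial.natDegree h2
  simp [Polynomial.natDegree_X_pow] at this
  omega

lemma one_sub_q_ne : (1 : RatFunc ℚ) - q ≠ 0 := by
  simpa using one_sub_q_pow_ne 1 le_rfl

lemma qint_natCast (n : ℕ) : qint (n : ℤ) = (1 - q ^ n) / (1 - q) := by
  rw [qint, zpow_natCast]

lemma qint_nat_ne_zero (n : ℕ) (hn : 1 ≤ n) : qint (n : ℤ) ≠ 0 := by
  rw [qint_natCast]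
  exact div_ne_zero (one_sub_q_pow_ne n hn) one_sub_q_ne

lemma qfact_ne_zero (n : ℕ) : qfact n ≠ 0 := by
  rw [qfact]
  apply Finset.prod_ne_zero_iff.2
  intro i _
  have := qint_nat_ne_zero (i + 1) (by omega)
  simpa using this

lemma qchoose_mul {s d : ℕ} (h : s ≤ d) :
    qchoose d s * (qfact s * qfact (d - s)) = qfact d := by
  rw [qchoose, if_pos h, div_mul_cancel₀]
  exact mul_ne_zero (qfact_ne_zero s) (qfact_ne_zero (d - s))

lemma qchoose_self (n : ℕ) : qchoose n n = 1 := by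
  rw [qchoose, if_pos le_rfl]
  simp [qfact]
  exact qfact_ne_zero n

lemma qchoose_zero (n : ℕ) : qchoose n 0 = 1 := by
  rw [qchoose, if_pos (Nat.zero_le n)]
  simp [qfact]
  exact qfact_ne_zero n

lemma qfact_succ (n : ℕ) : qfact (n + 1) = qfact n * qint ((n : ℤ) + 1) :=
  Finset.prod_range_succ _ n

lemma qint_core (t s e : ℕ) :
    q ^ s * qint (t : ℤ) * qint (e : ℤ) + qint ((t : ℤ) + e + s) * qint (s : ℤ)
      = qint ((t : ℤ) + s) * qint ((e : ℤ) + s) := by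
  have h1 : ((t : ℤ) + e + s) = ((t + e + s : ℕ) : ℤ) := by push_cast; ring
  have h2 : ((t : ℤ) + s) = ((t + s : ℕ) : ℤ) := by push_cast; ring
  have h3 : ((e : ℤ) + s) = ((e + s : ℕ) : ℤ) := by push_cast; ring
  rw [h1, h2, h3, qint_natCast, qint_natCast, qint_natCast, qint_natCast, qint_natCast,
    qint_natCast]
  field_simp
  ring

lemma pascal (t s d : ℕ) (h1 : 1 ≤ s) (h2 : s ≤ d) :
    q ^ s * qint (t : ℤ) * qchoose d s + qint ((t : ℤ) + d + 1) * qchoose d (s - 1)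
      = qint ((t : ℤ) + s) * qchoose (d + 1) s := by
  obtain ⟨s', rfl⟩ : ∃ s', s = s' + 1 := ⟨s - 1, by omega⟩
  obtain ⟨e, rfl⟩ : ∃ e, d = s' + 1 + e := ⟨d - (s' + 1), by omega⟩
  set c : RatFunc ℚ := qfact (s' + 1) * qfact (e + 1) with hc
  have hcne : c ≠ 0 := mul_ne_zero (qfact_ne_zero _) (qfact_ne_zero _)
  apply mul_right_cancel₀ hcne
  have e1 : qchoose (s' + 1 + e) (s' + 1) * c = qfact (s' + 1 + e) * qint ((e : ℤ) + 1) := by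
    have := qchoose_mul (show s' + 1 ≤ s' + 1 + e by omega)
    have hs : s' + 1 + e - (s' + 1) = e := by omega
    rw [hs] at this
    rw [hc, qfact_succ e]
    calc qchoose (s' + 1 + e) (s' + 1) * (qfact (s' + 1) * (qfact e * qint ((e : ℤ) + 1)))
        = qchoose (s' + 1 + e) (s' + 1) * (qfact (s' + 1) * qfact e) * qint ((e : ℤ) + 1) := by
          ring
      _ = qfact (s' + 1 + e) * qint ((e : ℤ) + 1) := by rw [this]
  have e2 : qchoose (s' + 1 + e) (s' + 1 - 1) * c = qfact (s' + 1 + e) * qint ((s' : ℤ) + 1) := by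
    have := qchoose_mul (show s' ≤ s' + 1 + e by omega)
    have hs : s' + 1 + e - s' = e + 1 := by omega
    rw [hs] at this
    have hss : s' + 1 - 1 = s' := by omega
    rw [hss, hc, qfact_succ s']
    calc qchoose (s' + 1 + e) s' * (qfact s' * qint ((s' : ℤ) + 1) * qfact (e + 1))
        = qchoose (s' + 1 + e) s' * (qfact s' * qfact (e + 1)) * qint ((s' : ℤ) + 1) := by ring
      _ = qfact (s' + 1 + e) * qint ((s' : ℤ) + 1) := by rw [this]
  have e3 : qchoose (s' + 1 + e + 1) (s' + 1) * c = qfact (s' + 1 + e) * qint ((s' : ℤ) + 1 + (e : ℤ) + 1) := by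
    have := qchoose_mul (show s' + 1 ≤ s' + 1 + e + 1 by omega)
    have hs : s' + 1 + e + 1 - (s' + 1) = e + 1 := by omega
    rw [hs] at this
    rw [hc, this, qfact_succ (s' + 1 + e)]
    push_cast
    ring
  calc (q ^ (s' + 1) * qint (t : ℤ) * qchoose (s' + 1 + e) (s' + 1)
        + qint ((t : ℤ) + (s' + 1 + e) + 1) * qchoose (s' + 1 + e) (s' + 1 - 1)) * c
      = q ^ (s' + 1) * qint (t : ℤ) * (qchoose (s' + 1 + e) (s' + 1) * c)
        + qint ((t : ℤ) + (s' + 1 + e) + 1) * (qchoose (s' + 1 + e) (s' + 1 - 1) * c) := by ring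
    _ = qfact (s' + 1 + e)
        * (q ^ (s' + 1) * qint (t : ℤ) * qint ((e : ℤ) + 1)
          + qint ((t : ℤ) + (e + 1) + (s' + 1)) * qint ((s' : ℤ) + 1)) := by
        rw [e1, e2]
        push_cast
        ring
    _ = qfact (s' + 1 + e) * (qint ((t : ℤ) + (s' + 1)) * qint (((e : ℤ) + 1) + (s' + 1))) := by
        have h := qint_core t (s' + 1) (e + 1)
        push_cast at h ⊢
        linear_combination qfact (s' + 1 + e) * h
    _ = qint ((t : ℤ) + (s' + 1)) * qchoose (s' + 1 + e + 1) (s' + 1) * c := by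
        rw [mul_assoc, e3]
        push_cast
        ring

lemma qint_neg (a : ℤ) : qint (-a) = -(q ^ (-a)) * qint a := by
  rw [qint, qint, ← mul_div_assoc]
  congr 1
  have h : q ^ (-a) * q ^ a = 1 := by
    rw [← zpow_add₀ q_ne_zero]; simp
  linear_combination -h

lemma qint_swap (a b : ℤ) : q ^ (a - b) * qint b + qint (a - b) = qint a := by
  rw [qint, qint, qint, ← mul_div_assoc, ← add_div]
  congr 1
  have h : q ^ (a - b) * q ^ b = q ^ a := by
    rw [← zpow_add₀ q_ne_zero]; congr 1; ring
  linear_combination -h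

lemma lin_swap (a b : ℤ) :
    (C (qint a) + C (q ^ a) * X : Polynomial (RatFunc ℚ)) =
      C (q ^ (a - b)) * (C (qint b) + C (q ^ b) * X) + C (qint (a - b)) := by
  have h1 : qint a = q ^ (a - b) * qint b + qint (a - b) := (qint_swap a b).symm
  have h2 : q ^ a = q ^ (a - b) * q ^ b := by
    rw [← zpow_add₀ q_ne_zero]; congr 1; ring
  rw [h1, h2, map_add, map_mul, map_mul]
  ring

lemma Icc_bot_split (a b : ℤ) (h : a ≤ b) : Finset.Icc a b = insert a (Finset.Icc (a + 1) b) := by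
  ext x
  simp only [Finset.mem_Icc, Finset.mem_insert]
  omega

lemma Icc_top_split (a b : ℤ) (h : a ≤ b) : Finset.Icc a b = insert b (Finset.Icc a (b - 1)) := by
  ext x
  simp only [Finset.mem_Icc, Finset.mem_insert]
  omega

lemma rec1 (m n : ℕ) :
    qbinomPoly m (n + 1) =
      C (qint ((n : ℤ) + 1))⁻¹ *
        ((C (qint ((m : ℤ) - n)) + C (q ^ ((m : ℤ) - n)) * X) * qbinomPoly m n) := by
  rw [qbinomPoly, qbinomPoly, qfact_succ]
  have h0 : ((m : ℤ) - (n + 1 : ℕ) + 1) = (m : ℤ) - n := by push_cast; ring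
  rw [h0]
  rw [Icc_bot_split ((m : ℤ) - n) m (by omega)]
  rw [Finset.prod_insert (by simp only [Finset.mem_Icc]; omega)]
  rw [mul_inv, map_mul]
  ring

lemma rec_top (j : ℕ) :
    qbinomPoly (j + 1) (j + 1) =
      C (qint ((j : ℤ) + 1))⁻¹ *
        ((C (qint ((j : ℤ) + 1)) + C (q ^ ((j : ℤ) + 1)) * X) * qbinomPoly j j) := by
  rw [qbinomPoly, qbinomPoly, qfact_succ]
  have h0 : (((j : ℕ) + 1 : ℕ) : ℤ) - ((j : ℕ) + 1 : ℕ) + 1 = (1 : ℤ) := by push_cast; ring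
  have h1 : ((j : ℤ)) - j + 1 = (1 : ℤ) := by ring
  rw [h0, h1]
  have h2 : (((j : ℕ) + 1 : ℕ) : ℤ) = (j : ℤ) + 1 := by push_cast; ring
  rw [h2]
  rw [Icc_top_split 1 ((j : ℤ) + 1) (by omega)]
  have h3 : ((j : ℤ) + 1 - 1) = (j : ℤ) := by ring
  rw [h3]
  rw [Finset.prod_insert (by simp only [Finset.mem_Icc]; omega)]
  rw [mul_inv, map_mul]
  ring

lemma rec_top' (j : ℕ) :
    (C (qint ((j : ℤ) + 1)) + C (q ^ ((j : ℤ) + 1)) * X) * qbinomPoly j j =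
      C (qint ((j : ℤ) + 1)) * qbinomPoly (j + 1) (j + 1) := by
  rw [rec_top, ← mul_assoc, ← map_mul]
  rw [mul_inv_cancel₀]
  · rw [map_one, one_mul]
  · have := qint_nat_ne_zero (j + 1) (by omega)
    simpa using this

noncomputable def Acoef (d k : ℕ) : RatFunc ℚ :=
  if k ≤ d then (-1) ^ (d - k) * q ^ ((d - k).choose 2) * qchoose d (d - k) else 0

lemma Acoef_eq {d k : ℕ} (h : k ≤ d) :
    Acoef d k = (-1) ^ (d - k) * q ^ ((d - k).choose 2) * qchoose d (d - k) := if_pos h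

lemma Acoef_eq_zero {d k : ℕ} (h : d < k) : Acoef d k = 0 := if_neg (by omega)

lemma choose_two_succ (n : ℕ) : (n + 1).choose 2 = n.choose 2 + n := by
  rw [Nat.choose_succ_succ]
  simp [Nat.choose_one_right]
  omega

lemma rec_top'' (j : ℕ) :
    (C (qint ((j + 1 : ℕ) : ℤ)) + C (q ^ (j + 1)) * X) * qbinomPoly j j =
      C (qint ((j + 1 : ℕ) : ℤ)) * qbinomPoly (j + 1) (j + 1) := by
  have h1 : ((j + 1 : ℕ) : ℤ) = (j : ℤ) + 1 := by push_cast; ring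
  have h2 : (q : RatFunc ℚ) ^ (j + 1) = q ^ ((j : ℤ) + 1) := by
    rw [← zpow_natCast]; congr 1
  rw [h1, h2]
  exact rec_top' j

lemma qint_add (a b : ℕ) :
    qint (a : ℤ) + q ^ a * qint (b : ℤ) = qint ((a + b : ℕ) : ℤ) := by
  rw [qint_natCast, qint_natCast, qint_natCast, ← mul_div_assoc, ← add_div]
  congr 1
  rw [pow_add]
  ring

lemma scalar0' (m d : ℕ) :
    -(Acoef d 0 * (q ^ (d - 0) * qint ((m + 0 + d + 1 : ℕ) : ℤ))) =
      qint ((m + d + 1 : ℕ) : ℤ) * Acoef (d + 1) 0 := by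
  rw [Acoef_eq (Nat.zero_le d), Acoef_eq (Nat.zero_le (d + 1)), Nat.sub_zero, Nat.sub_zero, qchoose_self, qchoose_self, choose_two_succ]
  have h : (m + 0 + d + 1 : ℕ) = (m + d + 1 : ℕ) := by omega
  rw [h]
  ring

lemma scalarS' (m d j : ℕ) (hj : j ≤ d) :
    Acoef d j * (q ^ (d - j) * qint ((m + j + 1 : ℕ) : ℤ)) -
      Acoef d (j + 1) * (q ^ (d - (j + 1)) * qint ((m + (j + 1) + d + 1 : ℕ) : ℤ)) =
    qint ((m + d + 1 : ℕ) : ℤ) * Acoef (d + 1) (j + 1) := by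
  rcases Nat.lt_or_ge j d with hlt | hge
  · obtain ⟨s, rfl⟩ : ∃ s, d = j + s + 1 := ⟨d - j - 1, by omega⟩
    have e1 : j + s + 1 - j = s + 1 := by omega
    have e2 : j + s + 1 - (j + 1) = s := by omega
    have e3 : j + s + 1 + 1 - (j + 1) = s + 1 := by omega
    rw [Acoef_eq (by omega : j ≤ j + s + 1), Acoef_eq (by omega : j + 1 ≤ j + s + 1),
      Acoef_eq (by omega : j + 1 ≤ j + s + 1 + 1), e1, e2, e3, choose_two_succ]
    have h := pascal (m + j + 1) (s + 1) (j + s + 1) (by omega) (by omega)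
    simp only [Nat.add_sub_cancel] at h
    have c1 : ((m + j + 1 : ℕ) : ℤ) + ((j + s + 1 : ℕ) : ℤ) + 1 =
        ((m + (j + 1) + (j + s + 1) + 1 : ℕ) : ℤ) := by push_cast; ring
    have c2 : ((m + j + 1 : ℕ) : ℤ) + ((s + 1 : ℕ) : ℤ) =
        ((m + (j + s + 1) + 1 : ℕ) : ℤ) := by push_cast; ring
    rw [c1, c2] at h
    linear_combination ((-1) ^ (s + 1) * q ^ (s.choose 2 + s)) * h
  · have hjd : j = d := by omega
    subst hjd
    rw [Acoef_eq (le_refl j), Acoef_eq_zero (by omega : j < j + 1),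
      Acoef_eq (le_refl (j + 1)), Nat.sub_self, Nat.sub_self]
    rw [qchoose_zero, qchoose_zero]
    simp

lemma key' (d m : ℕ) :
    C (q ^ ((m + d) * d)) * qbinomPoly m (m + d) =
      ∑ k ∈ Finset.range (d + 1), C (Acoef d k) * qbinomPoly (m + k) (m + k) := by
  induction d with
  | zero =>
    simp [Acoef, qchoose_self]
  | succ d IH =>
    have hM : qint ((m + d + 1 : ℕ) : ℤ) ≠ 0 := qint_nat_ne_zero _ (by omega)
    have hMc : ((m + d : ℕ) : ℤ) + 1 = ((m + d + 1 : ℕ) : ℤ) := by push_cast; ring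
    have hrec := rec1 m (m + d)
    rw [hMc] at hrec
    -- the L'' lemma
    have hL : C (q ^ (m + 2 * d + 1)) *
        (C (qint ((m : ℤ) - ((m + d : ℕ) : ℤ))) + C (q ^ ((m : ℤ) - ((m + d : ℕ) : ℤ))) * X) =
        C (q ^ (m + d + 1)) * X - C (q ^ (m + d + 1) * qint ((d : ℕ) : ℤ)) := by
      have h1 : ((m : ℤ) - ((m + d : ℕ) : ℤ)) = -(d : ℤ) := by push_cast; ring
      have h3 : (q : RatFunc ℚ) ^ (m + 2 * d + 1) * q ^ (-(d : ℤ)) = q ^ (m + d + 1) := by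
        rw [← zpow_natCast q (m + 2 * d + 1), ← zpow_add₀ q_ne_zero,
          ← zpow_natCast q (m + d + 1)]
        congr 1
        push_cast
        ring
      have h2 : (q : RatFunc ℚ) ^ (m + 2 * d + 1) * qint (-(d : ℤ)) =
          -(q ^ (m + d + 1) * qint ((d : ℕ) : ℤ)) := by
        rw [qint_neg]
        linear_combination (-(qint ((d : ℕ) : ℤ))) * h3
      rw [h1, mul_add, ← map_mul, ← mul_assoc, ← map_mul, h2, h3, map_neg]
      ring
    -- per-term transformation
    have term_eq : ∀ k, k ≤ d →
        (C (q ^ (m + d + 1)) * X - C (q ^ (m + d + 1) * qint ((d : ℕ) : ℤ))) *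
            qbinomPoly (m + k) (m + k) =
          C (q ^ (d - k) * qint ((m + k + 1 : ℕ) : ℤ)) * qbinomPoly (m + (k + 1)) (m + (k + 1)) -
            C (q ^ (d - k) * qint ((m + k + d + 1 : ℕ) : ℤ)) * qbinomPoly (m + k) (m + k) := by
      intro k hk
      have hpow : (q : RatFunc ℚ) ^ (m + d + 1) = q ^ (d - k) * q ^ (m + k + 1) := by
        rw [← pow_add]
        congr 1
        omega
      have hadd : qint ((m + k + 1 : ℕ) : ℤ) + q ^ (m + k + 1) * qint ((d : ℕ) : ℤ) =
          qint ((m + k + d + 1 : ℕ) : ℤ) := by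
        have := qint_add (m + k + 1) d
        rw [show m + k + 1 + d = m + k + d + 1 by omega] at this
        exact this
      have hrt := rec_top'' (m + k)
      -- algebra:
      calc (C (q ^ (m + d + 1)) * X - C (q ^ (m + d + 1) * qint ((d : ℕ) : ℤ))) *
            qbinomPoly (m + k) (m + k)
          = C (q ^ (d - k)) *
              (((C (qint ((m + k + 1 : ℕ) : ℤ)) + C (q ^ (m + k + 1)) * X) -
                C (qint ((m + k + 1 : ℕ) : ℤ) + q ^ (m + k + 1) * qint ((d : ℕ) : ℤ))) *
                qbinomPoly (m + k) (m + k)) := by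
            rw [hpow]
            simp only [map_add, map_mul]
            ring
        _ = C (q ^ (d - k)) *
              ((C (qint ((m + k + 1 : ℕ) : ℤ)) * qbinomPoly (m + k + 1) (m + k + 1)) -
                C (qint ((m + k + d + 1 : ℕ) : ℤ)) * qbinomPoly (m + k) (m + k)) := by
            rw [hadd, sub_mul, hrt]
        _ = C (q ^ (d - k) * qint ((m + k + 1 : ℕ) : ℤ)) *
              qbinomPoly (m + (k + 1)) (m + (k + 1)) -
            C (q ^ (d - k) * qint ((m + k + d + 1 : ℕ) : ℤ)) * qbinomPoly (m + k) (m + k) := by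
            rw [show m + (k + 1) = m + k + 1 from rfl, map_mul, map_mul]
            ring
    -- shift functions
    set F : ℕ → Polynomial (RatFunc ℚ) := fun k =>
      if k = 0 then 0 else
        C (Acoef d (k - 1) * (q ^ (d - (k - 1)) * qint ((m + (k - 1) + 1 : ℕ) : ℤ))) *
          qbinomPoly (m + k) (m + k) with hF
    set G : ℕ → Polynomial (RatFunc ℚ) := fun k =>
      C (Acoef d k * (q ^ (d - k) * qint ((m + k + d + 1 : ℕ) : ℤ))) *
        qbinomPoly (m + k) (m + k) with hG
    calc C (q ^ ((m + (d + 1)) * (d + 1))) * qbinomPoly m (m + (d + 1))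
        = C (qint ((m + d + 1 : ℕ) : ℤ))⁻¹ *
            ((C (q ^ (m + 2 * d + 1)) *
              (C (qint ((m : ℤ) - ((m + d : ℕ) : ℤ))) + C (q ^ ((m : ℤ) - ((m + d : ℕ) : ℤ))) * X)) *
             (C (q ^ ((m + d) * d)) * qbinomPoly m (m + d))) := by
          rw [show m + (d + 1) = m + d + 1 from rfl, hrec,
            show (m + d + 1) * (d + 1) = (m + 2 * d + 1) + (m + d) * d by ring,
            pow_add, map_mul]
          ring
      _ = C (qint ((m + d + 1 : ℕ) : ℤ))⁻¹ *
            ((C (q ^ (m + d + 1)) * X - C (q ^ (m + d + 1) * qint ((d : ℕ) : ℤ))) *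
              ∑ k ∈ Finset.range (d + 1), C (Acoef d k) * qbinomPoly (m + k) (m + k)) := by
          rw [hL, IH]
      _ = C (qint ((m + d + 1 : ℕ) : ℤ))⁻¹ * ∑ k ∈ Finset.range (d + 2), (F k - G k) := by
          congr 1
          rw [Finset.mul_sum, Finset.sum_sub_distrib]
          have hFs : ∑ k ∈ Finset.range (d + 2), F k =
              ∑ k ∈ Finset.range (d + 1),
                C (Acoef d k * (q ^ (d - k) * qint ((m + k + 1 : ℕ) : ℤ))) *
                  qbinomPoly (m + (k + 1)) (m + (k + 1)) := by
            rw [Finset.sum_range_succ' F (d + 1)]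
            simp only [hF, Nat.add_sub_cancel, if_neg (Nat.succ_ne_zero _), if_pos rfl]
            rw [add_zero]
          have hGs : ∑ k ∈ Finset.range (d + 2), G k = ∑ k ∈ Finset.range (d + 1), G k := by
            rw [Finset.sum_range_succ]
            have : Acoef d (d + 1) = 0 := Acoef_eq_zero (by omega)
            simp [hG, this]
          rw [hFs, hGs]
          rw [← Finset.sum_sub_distrib]
          refine Finset.sum_congr rfl fun k hk => ?_
          have hk' : k ≤ d := by
            simp only [Finset.mem_range] at hk; omega
          have h := term_eq k hk'
          simp only [hG, map_mul]
          simp only [map_mul] at h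
          linear_combination C (Acoef d k) * h
      _ = ∑ k ∈ Finset.range (d + 2), C (Acoef (d + 1) k) * qbinomPoly (m + k) (m + k) := by
          rw [Finset.mul_sum]
          refine Finset.sum_congr rfl fun k hk => ?_
          have hk' : k ≤ d + 1 := by simp only [Finset.mem_range] at hk; omega
          have hcoef : F k - G k =
              C (qint ((m + d + 1 : ℕ) : ℤ) * Acoef (d + 1) k) * qbinomPoly (m + k) (m + k) := by
            rcases Nat.eq_zero_or_pos k with rfl | hpos
            · have hF0 : F 0 = 0 := by simp [hF]
              have hG0 : G 0 = C (Acoef d 0 * (q ^ (d - 0) * qint ((m + 0 + d + 1 : ℕ) : ℤ))) *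
                  qbinomPoly (m + 0) (m + 0) := rfl
              rw [hF0, hG0, zero_sub, ← neg_mul, ← map_neg, scalar0' m d]
            · obtain ⟨j, rfl⟩ : ∃ j, k = j + 1 := ⟨k - 1, by omega⟩
              have hF1 : F (j + 1) = C (Acoef d j * (q ^ (d - j) * qint ((m + j + 1 : ℕ) : ℤ))) *
                  qbinomPoly (m + (j + 1)) (m + (j + 1)) := by
                simp only [hF, if_neg (Nat.succ_ne_zero j), Nat.add_sub_cancel]
              have hG1 : G (j + 1) = C (Acoef d (j + 1) *
                  (q ^ (d - (j + 1)) * qint ((m + (j + 1) + d + 1 : ℕ) : ℤ))) *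
                  qbinomPoly (m + (j + 1)) (m + (j + 1)) := rfl
              rw [hF1, hG1, ← sub_mul, ← map_sub, scalarS' m d j (by omega)]
          rw [hcoef, ← mul_assoc, ← map_mul, inv_mul_cancel_left₀ hM]

theorem qbinomPoly_expansion (m n : ℕ) (hmn : m ≤ n) :
    qbinomPoly m n =
      Polynomial.C (q ^ (-((n : ℤ) * ((n : ℤ) - (m : ℤ))))) *
        ∑ k ∈ Finset.range (n - m + 1),
          Polynomial.C ((-1) ^ (n - m - k) * q ^ ((n - m - k).choose 2) *
              qchoose (n - m) (n - m - k)) * qbinomPoly (m + k) (m + k) := by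
  obtain ⟨d, rfl⟩ : ∃ d, n = m + d := ⟨n - m, by omega⟩
  have hkey := key' d m
  have hinv : qbinomPoly m (m + d) =
      C (q ^ ((m + d) * d))⁻¹ *
        ∑ k ∈ Finset.range (d + 1), C (Acoef d k) * qbinomPoly (m + k) (m + k) := by
    rw [← hkey, ← mul_assoc, ← map_mul, inv_mul_cancel₀ (pow_ne_zero _ q_ne_zero), map_one,
      one_mul]
  rw [hinv, show m + d - m = d by omega]
  congr 1
  · congr 1
    rw [← zpow_natCast q ((m + d) * d), ← zpow_neg]
    congr 1
    push_cast
    ring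
  · refine Finset.sum_congr rfl fun k hk => ?_
    congr 2
    rw [Acoef_eq (by simp only [Finset.mem_range] at hk; omega : k ≤ d)]
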